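/- arXiv:math/0403484 — 2 statements merged into one kernel-verified Lean document; each statement's English description precedes it below -/
import Mathlib

section
/- Let p, q ∈ k[x,y] with k an algebraically closed field, deg p = n, deg q = m, and suppose the leading forms of p and q have no common nontrivial zero. Then every polynomial in the ideal generated by p and q of degree at most n+m-1 can be written as A·p + B·q with deg A ≤ m-1 and deg B ≤ n-1. -/
open MvPolynomial

section Aux

variable {σ R : Type*} [CommRing R]

lemma aux_hc_top_ne_zero (φ : MvPolynomial σ R) (hφ : φ ≠ 0) :
    homogeneousComponent φ.totalDegree φ ≠ 0 := by
  obtain ⟨d, hd, hdeg⟩ := Finset.exists_mem_eq_sup φ.support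
    (Finset.nonempty_iff_ne_empty.mpr (fun h => hφ (support_eq_empty.mp h)))
    (fun s => s.sum fun _ e => e)
  intro h
  have hc := coeff_homogeneousComponent (φ := φ) φ.totalDegree d
  rw [h, coeff_zero] at hc
  have hdd : d.degree = φ.totalDegree := by
    rw [totalDegree, hdeg]
    simp [Finsupp.degree, Finsupp.sum]
    rfl
  rw [if_pos hdd] at hc
  exact (mem_support_iff.mp hd) hc.symm

lemma aux_sum_hc {φ : MvPolynomial σ R} {N : ℕ} (h : φ.totalDegree ≤ N) :
    ∑ i ∈ Finset.range (N + 1), homogeneousComponent i φ = φ := by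
  calc ∑ i ∈ Finset.range (N + 1), homogeneousComponent i φ
      = ∑ i ∈ Finset.range (φ.totalDegree + 1), homogeneousComponent i φ := by
        refine (Finset.sum_subset (fun x hx => Finset.mem_range.mpr ?_)
          (fun x hx hnx => homogeneousComponent_eq_zero _ φ ?_)).symm
        · have := Finset.mem_range.mp hx; omega
        · have h1 := Finset.mem_range.mp hx
          have h2 : ¬ x < φ.totalDegree + 1 := fun hcon => hnx (Finset.mem_range.mpr hcon)
          omega
    _ = φ := sum_homogeneousComponent φ

lemma aux_hc_mul {P Q : MvPolynomial σ R} {a b : ℕ}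
    (hP : P.totalDegree ≤ a) (hQ : Q.totalDegree ≤ b) :
    homogeneousComponent (a + b) (P * Q) =
      homogeneousComponent a P * homogeneousComponent b Q := by
  conv_lhs => rw [← aux_sum_hc hP, ← aux_sum_hc hQ, Finset.sum_mul_sum]
  rw [map_sum]
  have key : ∀ i ∈ Finset.range (a + 1),
      (homogeneousComponent (a + b) (∑ j ∈ Finset.range (b + 1),
        homogeneousComponent i P * homogeneousComponent j Q))
      = if i = a then homogeneousComponent a P * homogeneousComponent b Q else 0 := by
    intro i hi
    rw [map_sum]
    have inner : ∀ j ∈ Finset.range (b + 1),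
        homogeneousComponent (a + b) (homogeneousComponent i P * homogeneousComponent j Q)
        = if a + b = i + j then homogeneousComponent i P * homogeneousComponent j Q else 0 := by
      intro j hj
      exact homogeneousComponent_of_mem ((mem_homogeneousSubmodule _ _).mpr
        ((homogeneousComponent_isHomogeneous i P).mul (homogeneousComponent_isHomogeneous j Q)))
    rw [Finset.sum_congr rfl inner]
    simp only [Finset.mem_range] at hi
    by_cases hia : i = a
    · subst hia
      rw [if_pos rfl]
      simp only [add_right_inj]
      rw [Finset.sum_ite_eq]
      simp
    · rw [if_neg hia]
      apply Finset.sum_eq_zero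
      intro j hj
      simp only [Finset.mem_range] at hj
      rw [if_neg (by omega)]
  rw [Finset.sum_congr rfl key]
  simp

lemma aux_deg_le {A : MvPolynomial σ R} {t : ℕ} (ht : 1 ≤ t)
    (h : ∀ i, t ≤ i → homogeneousComponent i A = 0) : A.totalDegree ≤ t - 1 := by
  by_cases hA : A = 0
  · simp [hA]
  · by_contra hcon
    push_neg at hcon
    exact aux_hc_top_ne_zero A hA (h _ (by omega))

end Aux

section Prime

variable {k : Type*} [Field k]

lemma aux_prime_X0 : Prime (X 0 : MvPolynomial (Fin 2) k) := by
  have h : Prime ((finSuccEquiv k 1) (X 0)) := by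
    rw [finSuccEquiv_X_zero]
    exact Polynomial.prime_X
  exact (MulEquiv.prime_iff (finSuccEquiv k 1).toRingEquiv.toMulEquiv).mp h

lemma aux_prime_X1 : Prime (X 1 : MvPolynomial (Fin 2) k) := by
  have h := (MulEquiv.prime_iff (renameEquiv k (Equiv.swap (0 : Fin 2) 1)).toRingEquiv.toMulEquiv).mpr
    (aux_prime_X0 (k := k))
  simpa using h

lemma aux_relprime [IsAlgClosed k] {u v : MvPolynomial (Fin 2) k} (hu : u ≠ 0)
    (h : ∀ z : Fin 2 → k, z ≠ 0 → ¬(eval z u = 0 ∧ eval z v = 0)) : IsRelPrime u v := by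
  rw [UniqueFactorizationMonoid.isRelPrime_iff_no_prime_factors hu]
  intro d hdu hdv hd
  by_cases hex : ∃ z : Fin 2 → k, z ≠ 0 ∧ eval z d = 0
  · obtain ⟨z, hz, hzd⟩ := hex
    obtain ⟨u', rfl⟩ := hdu
    obtain ⟨v', rfl⟩ := hdv
    exact h z hz ⟨by simp [hzd], by simp [hzd]⟩
  · push_neg at hex
    have hprime : (Ideal.span {d}).IsPrime := (Ideal.span_singleton_prime hd.ne_zero).mpr hd
    have hsub : zeroLocus k (Ideal.span {d}) ⊆ {(0 : Fin 2 → k)} := by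
      intro z hz
      have hzd : eval z d = 0 := by simpa [coe_aeval_eq_eval] using hz d (Ideal.subset_span rfl)
      by_contra h0
      exact hex z h0 hzd
    have hX : ∀ w : MvPolynomial (Fin 2) k, eval (0 : Fin 2 → k) w = 0 → d ∣ w := by
      intro w hw
      have hmem : w ∈ vanishingIdeal k (zeroLocus k (Ideal.span {d})) := by
        apply vanishingIdeal_anti_mono hsub
        rw [mem_vanishingIdeal_iff]
        rintro z rfl
        simpa [coe_aeval_eq_eval] using hw
      rw [vanishingIdeal_zeroLocus_eq_radical, hprime.radical] at hmem
      exact Ideal.mem_span_singleton.mp hmem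
    have h0 : d ∣ X 0 := hX _ (by simp)
    have h1 : d ∣ X 1 := hX _ (by simp)
    obtain ⟨e, he⟩ := h0
    rcases aux_prime_X0.irreducible.isUnit_or_isUnit he with he' | he'
    · exact hd.not_unit he'
    · obtain ⟨w, hw⟩ := he'.exists_right_inv
      have hX0d : (X 0 : MvPolynomial (Fin 2) k) ∣ d :=
        ⟨w, by rw [he, mul_assoc, hw, mul_one]⟩
      obtain ⟨g, hg⟩ := hX0d.trans h1
      have := congrArg (eval (![0, 1] : Fin 2 → k)) hg
      simp at this

lemma aux_homog_div {v w : MvPolynomial (Fin 2) k} {m s : ℕ} (hv : v.IsHomogeneous m)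
    (hv0 : v ≠ 0) (hw : w.IsHomogeneous s) (hdvd : v ∣ w) :
    ∃ C : MvPolynomial (Fin 2) k, C.IsHomogeneous (s - m) ∧ w = v * C := by
  obtain ⟨C0, rfl⟩ := hdvd
  by_cases hC0 : C0 = 0
  · exact ⟨0, isHomogeneous_zero _ _ _, by rw [hC0]⟩
  · have hkey := aux_hc_mul (P := v) (Q := C0) (a := m) (b := C0.totalDegree)
      hv.totalDegree_le le_rfl
    have hvm : homogeneousComponent m v = v := by
      rw [homogeneousComponent_of_mem ((mem_homogeneousSubmodule _ _).mpr hv), if_pos rfl]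
    have hne : homogeneousComponent C0.totalDegree C0 ≠ 0 := aux_hc_top_ne_zero _ hC0
    have hprod : v * homogeneousComponent C0.totalDegree C0 ≠ 0 := mul_ne_zero hv0 hne
    have hs : m + C0.totalDegree = s := by
      by_contra hne'
      have hz : homogeneousComponent (m + C0.totalDegree) (v * C0) = 0 := by
        rw [homogeneousComponent_of_mem ((mem_homogeneousSubmodule _ _).mpr hw),
          if_neg hne']
      rw [hkey, hvm] at hz
      exact hprod hz
    refine ⟨homogeneousComponent C0.totalDegree C0, ?_, ?_⟩
    · have hh := homogeneousComponent_isHomogeneous C0.totalDegree C0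
      rwa [show s - m = C0.totalDegree by omega]
    · have hfix : homogeneousComponent s (v * C0) = v * C0 := by
        rw [homogeneousComponent_of_mem ((mem_homogeneousSubmodule _ _).mpr hw), if_pos rfl]
      rw [← hfix, ← hs, hkey, hvm]

end Prime

theorem stmt6 {k : Type*} [Field k] [IsAlgClosed k]
    (p q : MvPolynomial (Fin 2) k) (n m : ℕ)
    (hp : p ≠ 0) (hq : q ≠ 0)
    (hpn : p.totalDegree = n) (hqm : q.totalDegree = m)
    (hlead : ∀ a b : k, ¬(a = 0 ∧ b = 0) →
      ¬(eval ![a, b] (homogeneousComponent n p) = 0 ∧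
        eval ![a, b] (homogeneousComponent m q) = 0)) :
    ∀ f ∈ Ideal.span {p, q}, f.totalDegree ≤ n + m - 1 →
      ∃ A B : MvPolynomial (Fin 2) k,
        f = A * p + B * q ∧ A.totalDegree ≤ m - 1 ∧ B.totalDegree ≤ n - 1 := by
  intro f hf hdf
  obtain ⟨A, B, hAB⟩ := Ideal.mem_span_pair.mp hf
  by_cases hm0 : m = 0
  · subst hm0
    set c := coeff 0 q with hc_def
    have hqC : (C c : MvPolynomial (Fin 2) k) = q := by
      have h := sum_homogeneousComponent q
      rwa [hqm, Finset.range_one, Finset.sum_singleton, homogeneousComponent_zero] at h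
    have hc0 : c ≠ 0 := fun h => hq (by rw [← hqC, h, map_zero])
    refine ⟨0, f * C c⁻¹, ?_, by simp, ?_⟩
    · rw [zero_mul, zero_add, mul_assoc, ← hqC, ← map_mul, inv_mul_cancel₀ hc0, map_one, mul_one]
    · calc (f * C c⁻¹).totalDegree ≤ f.totalDegree + (C c⁻¹ :
            MvPolynomial (Fin 2) k).totalDegree := totalDegree_mul _ _
        _ ≤ n - 1 := by rw [totalDegree_C]; omega
  by_cases hn0 : n = 0
  · subst hn0
    set c := coeff 0 p with hc_def
    have hpC : (C c : MvPolynomial (Fin 2) k) = p := by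
      have h := sum_homogeneousComponent p
      rwa [hpn, Finset.range_one, Finset.sum_singleton, homogeneousComponent_zero] at h
    have hc0 : c ≠ 0 := fun h => hp (by rw [← hpC, h, map_zero])
    refine ⟨f * C c⁻¹, 0, ?_, ?_, by simp⟩
    · rw [zero_mul, add_zero, mul_assoc, ← hpC, ← map_mul, inv_mul_cancel₀ hc0, map_one, mul_one]
    · calc (f * C c⁻¹).totalDegree ≤ f.totalDegree + (C c⁻¹ :
            MvPolynomial (Fin 2) k).totalDegree := totalDegree_mul _ _
        _ ≤ m - 1 := by rw [totalDegree_C]; omega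
  have hn : 1 ≤ n := by omega
  have hm : 1 ≤ m := by omega
  set u := homogeneousComponent n p with hu_def
  set v := homogeneousComponent m q with hv_def
  have hu : u ≠ 0 := by rw [hu_def, ← hpn]; exact aux_hc_top_ne_zero p hp
  have hv : v ≠ 0 := by rw [hv_def, ← hqm]; exact aux_hc_top_ne_zero q hq
  have hrel : IsRelPrime v u := by
    apply aux_relprime hv
    intro z hz hzuv
    have hzz : (![z 0, z 1] : Fin 2 → k) = z := by
      funext i
      fin_cases i <;> simp
    have hab : ¬(z 0 = 0 ∧ z 1 = 0) := by
      intro ⟨h0, h1⟩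
      apply hz
      funext i
      fin_cases i <;> simpa
    exact hlead (z 0) (z 1) hab ⟨by rw [hzz]; exact hzuv.2, by rw [hzz]; exact hzuv.1⟩
  have key : ∀ D : ℕ, ∀ A B : MvPolynomial (Fin 2) k, A * p + B * q = f →
      A.totalDegree + n ≤ D → B.totalDegree + m ≤ D →
      ∃ A' B' : MvPolynomial (Fin 2) k,
        f = A' * p + B' * q ∧ A'.totalDegree ≤ m - 1 ∧ B'.totalDegree ≤ n - 1 := by
    intro D
    induction D using Nat.strong_induction_on with
    | _ D IH =>
      intro A B hf' hA hB
      by_cases hD : D ≤ n + m - 1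
      · exact ⟨A, B, hf'.symm, by omega, by omega⟩
      · push_neg at hD
        have hDnm : n + m ≤ D := by omega
        set a := D - n with ha_def
        set b := D - m with hb_def
        have han : a + n = D := by omega
        have hbm : b + m = D := by omega
        have hAa : A.totalDegree ≤ a := by omega
        have hBb : B.totalDegree ≤ b := by omega
        have e1 : homogeneousComponent D f = 0 :=
          homogeneousComponent_eq_zero _ f (by omega)
        have e2 : homogeneousComponent D (A * p) = homogeneousComponent a A * u := by
          rw [← han]
          exact aux_hc_mul hAa (le_of_eq hpn)
        have e3 : homogeneousComponent D (B * q) = homogeneousComponent b B * v := by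
          rw [← hbm]
          exact aux_hc_mul hBb (le_of_eq hqm)
        have e0 : homogeneousComponent a A * u + homogeneousComponent b B * v = 0 := by
          have hcongr := congrArg (homogeneousComponent D) hf'
          rwa [map_add, e2, e3, e1] at hcongr
        have hdvd : v ∣ homogeneousComponent a A * u :=
          ⟨-(homogeneousComponent b B), by linear_combination e0⟩
        have hvA : v ∣ homogeneousComponent a A := hrel.dvd_of_dvd_mul_right hdvd
        obtain ⟨Cc, hChom, hCv⟩ := aux_homog_div (homogeneousComponent_isHomogeneous m q) hv
          (homogeneousComponent_isHomogeneous a A) hvA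
        rw [← hv_def] at hCv
        have hCdeg : Cc.totalDegree ≤ a - m := hChom.totalDegree_le
        have hB₁ : homogeneousComponent b B = -(Cc * u) := by
          have hveq : v * (Cc * u + homogeneousComponent b B) = 0 := by
            linear_combination e0 - u * hCv
          have := (mul_eq_zero.mp hveq).resolve_left hv
          linear_combination this
        have hamm : a - m + m = a := by omega
        have hamn : a - m + n = b := by omega
        have hCq : (Cc * q).totalDegree ≤ a :=
          le_trans (totalDegree_mul _ _) (by omega)
        have hCp : (Cc * p).totalDegree ≤ b :=
          le_trans (totalDegree_mul _ _) (by omega)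
        have hCC : homogeneousComponent (a - m) Cc = Cc := by
          rw [homogeneousComponent_of_mem ((mem_homogeneousSubmodule _ _).mpr hChom),
            if_pos rfl]
        have hA'comp : ∀ i, a ≤ i → homogeneousComponent i (A - Cc * q) = 0 := by
          intro i hi
          rw [map_sub]
          rcases eq_or_lt_of_le hi with heq | hlt
          · rw [← heq]
            have h1 : homogeneousComponent a (Cc * q) = Cc * v := by
              rw [← hamm, aux_hc_mul hCdeg (le_of_eq hqm), hCC, ← hv_def]
            rw [h1, hCv]
            ring
          · rw [homogeneousComponent_eq_zero _ A (lt_of_le_of_lt hAa hlt),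
              homogeneousComponent_eq_zero _ _ (lt_of_le_of_lt hCq hlt), sub_zero]
        have hB'comp : ∀ i, b ≤ i → homogeneousComponent i (B + Cc * p) = 0 := by
          intro i hi
          rw [map_add]
          rcases eq_or_lt_of_le hi with heq | hlt
          · rw [← heq]
            have h1 : homogeneousComponent b (Cc * p) = Cc * u := by
              rw [← hamn, aux_hc_mul hCdeg (le_of_eq hpn), hCC, ← hu_def]
            rw [h1, hB₁]
            ring
          · rw [homogeneousComponent_eq_zero _ B (lt_of_le_of_lt hBb hlt),
              homogeneousComponent_eq_zero _ _ (lt_of_le_of_lt hCp hlt), add_zero]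
        have hA'deg : (A - Cc * q).totalDegree ≤ a - 1 := aux_deg_le (by omega) hA'comp
        have hB'deg : (B + Cc * p).totalDegree ≤ b - 1 := aux_deg_le (by omega) hB'comp
        exact IH (D - 1) (by omega) (A - Cc * q) (B + Cc * p)
          (by linear_combination hf') (by omega) (by omega)
  exact key (max (A.totalDegree + n) (B.totalDegree + m)) A B hAB
    (le_max_left _ _) (le_max_right _ _)
end

section
/- For nonzero homogeneous polynomials P of degree n and Q of degree m in two variables with no common nontrivial zero over an algebraically closed field, the map (A,B) ↦ A·P + B·Q from pairs of homogeneous polynomials of degrees m-1 and n-1 to homogeneous polynomials of degree n+m-1 is a linear isomorphism. -/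
open MvPolynomial


namespace Stmt7Aux

variable {k : Type*} [Field k]

noncomputable def φ : MvPolynomial (Fin 2) k →ₐ[k] Polynomial k :=
  MvPolynomial.aeval ![Polynomial.X, 1]

lemma deg2 (s : Fin 2 →₀ ℕ) : s.degree = s 0 + s 1 := by
  rw [Finsupp.degree_apply, Finset.sum_subset (Finset.subset_univ s.support)]
  · simp [Fin.sum_univ_two]
  · intro i _ hi; simpa using Finsupp.notMem_support_iff.mp hi

lemma repr2 {s : Fin 2 →₀ ℕ} {d : ℕ} (hs : s.degree = d) :
    s = Finsupp.single 0 (s 0) + Finsupp.single 1 (d - s 0) := by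
  have h2 := deg2 s
  ext a
  fin_cases a <;> simp [Finsupp.single_apply] <;> omega

lemma degree_target (d i : ℕ) :
    (Finsupp.single (0 : Fin 2) i + Finsupp.single 1 (d - i)).degree = i + (d - i) := by
  rw [deg2]; simp [Finsupp.single_apply]

lemma φ_monomial (s : Fin 2 →₀ ℕ) (c : k) :
    φ (monomial s c) = Polynomial.C c * Polynomial.X ^ (s 0) := by
  rw [φ, MvPolynomial.aeval_monomial, Finsupp.prod_fintype _ _ (fun i => pow_zero _)]
  simp [Fin.prod_univ_two, Polynomial.C_eq_algebraMap]

lemma coeff_φ {p : MvPolynomial (Fin 2) k} {d : ℕ} (hp : p.IsHomogeneous d) (i : ℕ) :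
    (φ p).coeff i = coeff (Finsupp.single 0 i + Finsupp.single 1 (d - i)) p := by
  have hdeg : ∀ s ∈ p.support, s.degree = d := fun s hs => by
    rw [Finsupp.degree_eq_weight_one]
    exact hp (mem_support_iff.mp hs)
  conv_lhs => rw [p.as_sum, map_sum, Polynomial.finset_sum_coeff]
  have h1 : ∀ s ∈ p.support, (φ (monomial s (coeff s p))).coeff i
      = if s 0 = i then coeff s p else 0 := by
    intro s hs
    rw [φ_monomial, Polynomial.coeff_C_mul, Polynomial.coeff_X_pow]
    by_cases h : s 0 = i <;> simp [h]
    omega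
  rw [Finset.sum_congr rfl h1, Finset.sum_eq_single (Finsupp.single 0 i + Finsupp.single 1 (d - i))]
  · rw [if_pos]
    simp [Finsupp.single_apply]
  · intro s hs hne
    rw [if_neg]
    intro h0
    exact hne (h0 ▸ repr2 (hdeg s hs))
  · intro h
    have hz : coeff (Finsupp.single (0:Fin 2) i + Finsupp.single 1 (d - i)) p = 0 :=
      notMem_support_iff.mp h
    rw [hz, ite_self]

lemma natDegree_φ_le {p : MvPolynomial (Fin 2) k} {d : ℕ} (hp : p.IsHomogeneous d) :
    (φ p).natDegree ≤ d := by
  rw [Polynomial.natDegree_le_iff_coeff_eq_zero]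
  intro i hi
  rw [coeff_φ hp]
  exact hp.coeff_eq_zero (by rw [degree_target]; omega)

lemma φ_inj {p : MvPolynomial (Fin 2) k} {d : ℕ} (hp : p.IsHomogeneous d) (h : φ p = 0) :
    p = 0 := by
  ext s
  by_cases hs : s.degree = d
  · have h0 := coeff_φ hp (s 0)
    rw [h, Polynomial.coeff_zero] at h0
    rw [← repr2 hs] at h0
    rw [coeff_zero]
    exact h0.symm
  · simp [hp.coeff_eq_zero hs]

lemma aeval_φ (a : k) (p : MvPolynomial (Fin 2) k) :
    Polynomial.aeval a (φ p) = eval ![a, 1] p := by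
  have h : (Polynomial.aeval a).comp φ = (MvPolynomial.aeval ![a, 1] : MvPolynomial (Fin 2) k →ₐ[k] k) := by
    apply MvPolynomial.algHom_ext
    intro i
    fin_cases i <;>
      simp [φ, AlgHom.comp_apply, MvPolynomial.aeval_X, Matrix.cons_val_zero, Matrix.cons_val_one]
  have h2 := DFunLike.congr_fun h p
  rw [AlgHom.comp_apply] at h2
  rw [h2, MvPolynomial.aeval_def, MvPolynomial.eval, coe_eval₂Hom, Algebra.algebraMap_self]

lemma eval10 {p : MvPolynomial (Fin 2) k} {d : ℕ} (hp : p.IsHomogeneous d) :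
    eval ![(1:k), 0] p = coeff (Finsupp.single 0 d) p := by
  have hdeg : ∀ s ∈ p.support, s.degree = d := fun s hs => by
    rw [Finsupp.degree_eq_weight_one]
    exact hp (mem_support_iff.mp hs)
  rw [eval_eq']
  have h1 : ∀ s ∈ p.support, coeff s p * ∏ i : Fin 2, (![(1:k),0]) i ^ s i
      = if s 1 = 0 then coeff s p else 0 := by
    intro s hs
    rw [Fin.prod_univ_two]
    by_cases h : s 1 = 0 <;> simp [h, zero_pow]
  rw [Finset.sum_congr rfl h1, Finset.sum_eq_single (Finsupp.single 0 d)]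
  · simp [Finsupp.single_apply]
  · intro s hs hne
    rw [if_neg]
    intro hz
    apply hne
    have h2 := deg2 s
    have h3 := hdeg s hs
    ext a
    fin_cases a <;> simp [Finsupp.single_apply] <;> omega
  · intro h
    have : coeff (Finsupp.single (0:Fin 2) d) p = 0 := notMem_support_iff.mp h
    simp [this, Finsupp.single_apply]

end Stmt7Aux

namespace Stmt7Aux

variable {k : Type*} [Field k]

lemma key [IsAlgClosed k] (P Q A B : MvPolynomial (Fin 2) k) (n m : ℕ) (hn : 1 ≤ n)
    (hPh : P.IsHomogeneous n) (hQh : Q.IsHomogeneous m)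
    (hBh : B.IsHomogeneous (n - 1))
    (hP0 : coeff (Finsupp.single 0 n) P ≠ 0)
    (hlead : ∀ a b : k, ¬(a = 0 ∧ b = 0) →
      ¬(eval ![a, b] P = 0 ∧ eval ![a, b] Q = 0))
    (h : A * P + B * Q = 0) : B = 0 := by
  have hco : IsCoprime (φ P) (φ Q) := by
    rw [Polynomial.isCoprime_iff_aeval_ne_zero_of_isAlgClosed k k]
    intro a
    have := hlead a 1 (by simp)
    rw [not_and_or] at this
    rwa [aeval_φ, aeval_φ]
  have hdvd : φ P ∣ φ B * φ Q := by
    refine ⟨-φ A, ?_⟩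
    have h2 := congrArg φ h
    rw [map_add, map_mul, map_mul, map_zero] at h2
    linear_combination h2
  have hPB : φ P ∣ φ B := hco.dvd_of_dvd_mul_right hdvd
  have hPcoeff : (φ P).coeff n ≠ 0 := by
    rw [coeff_φ hPh]
    simpa using hP0
  have hdegP : (φ P).degree = (n : ℕ) := by
    have h1 : (φ P).natDegree = n :=
      le_antisymm (natDegree_φ_le hPh) (Polynomial.le_natDegree_of_ne_zero hPcoeff)
    rw [Polynomial.degree_eq_natDegree (fun hz => hPcoeff (by simp [hz])), h1]
  have hdegB : (φ B).degree < (φ P).degree := by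
    rw [hdegP]
    calc (φ B).degree ≤ ((φ B).natDegree : WithBot ℕ) := Polynomial.degree_le_natDegree
    _ ≤ ((n - 1 : ℕ) : WithBot ℕ) := by exact_mod_cast natDegree_φ_le hBh
    _ < (n : ℕ) := by exact_mod_cast (by omega : n - 1 < n)
  exact φ_inj hBh (Polynomial.eq_zero_of_dvd_of_degree_lt hPB hdegB)


noncomputable def finEquiv (d : ℕ) : {s : Fin 2 →₀ ℕ | s.degree = d} ≃ Fin (d + 1) where
  toFun s := ⟨s.1 0, by have h1 := deg2 s.1; have h2 := s.2; simp only [Set.mem_setOf_eq] at h2; omega⟩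
  invFun i := ⟨Finsupp.single 0 i.1 + Finsupp.single 1 (d - i.1), by
    have hi := i.2
    simp only [Set.mem_setOf_eq]
    rw [deg2]
    simp [Finsupp.single_apply]
    omega⟩
  left_inv s := by
    have h1 := deg2 s.1
    have h2 := s.2
    simp only [Set.mem_setOf_eq] at h2
    ext a
    fin_cases a <;> simp [Finsupp.single_apply] <;> omega
  right_inv i := by
    ext
    simp [Finsupp.single_apply]

noncomputable def hEquiv (d : ℕ) :
    homogeneousSubmodule (Fin 2) k d ≃ₗ[k] (Fin (d + 1) → k) :=
  (LinearEquiv.ofEq _ _ (homogeneousSubmodule_eq_finsupp_supported (Fin 2) k d)).trans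
    ((AddMonoidAlgebra.supportedEquivFinsupp _).trans
      ((Finsupp.domLCongr (finEquiv d)).trans (Finsupp.linearEquivFunOnFinite k k _)))

instance (d : ℕ) : FiniteDimensional k (homogeneousSubmodule (Fin 2) k d) :=
  Module.Finite.equiv (hEquiv d).symm

lemma finrank_h (d : ℕ) : Module.finrank k (homogeneousSubmodule (Fin 2) k d) = d + 1 := by
  rw [(hEquiv (k := k) d).finrank_eq, Module.finrank_fin_fun]


end Stmt7Aux

open Stmt7Aux

theorem stmt7 {k : Type*} [Field k] [IsAlgClosed k]
    (P Q : MvPolynomial (Fin 2) k) (n m : ℕ) (hn : 1 ≤ n) (hm : 1 ≤ m)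
    (hP : P ≠ 0) (hQ : Q ≠ 0)
    (hPh : P.IsHomogeneous n) (hQh : Q.IsHomogeneous m)
    (hlead : ∀ a b : k, ¬(a = 0 ∧ b = 0) →
      ¬(eval ![a, b] P = 0 ∧ eval ![a, b] Q = 0)) :
    ∃ e : (homogeneousSubmodule (Fin 2) k (m - 1) ×
            homogeneousSubmodule (Fin 2) k (n - 1)) ≃ₗ[k]
          homogeneousSubmodule (Fin 2) k (n + m - 1),
      ∀ (A : homogeneousSubmodule (Fin 2) k (m - 1))
        (B : homogeneousSubmodule (Fin 2) k (n - 1)),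
        (e (A, B) : MvPolynomial (Fin 2) k) = (A : MvPolynomial (Fin 2) k) * P +
          (B : MvPolynomial (Fin 2) k) * Q := by
  classical
  set H := fun d => homogeneousSubmodule (Fin 2) k d with hH
  have hmem1 : ∀ A : H (m - 1), A.1 * P ∈ H (n + m - 1) := by
    intro A
    rw [mem_homogeneousSubmodule]
    have := A.2.mul hPh
    convert this using 1
    omega
  have hmem2 : ∀ B : H (n - 1), B.1 * Q ∈ H (n + m - 1) := by
    intro B
    rw [mem_homogeneousSubmodule]
    have := B.2.mul hQh
    convert this using 1
    omega
  let f1 : H (m - 1) →ₗ[k] H (n + m - 1) :=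
    { toFun := fun A => ⟨A.1 * P, hmem1 A⟩
      map_add' := fun A B => by ext; simp [add_mul]
      map_smul' := fun c A => by ext; simp [smul_mul_assoc] }
  let f2 : H (n - 1) →ₗ[k] H (n + m - 1) :=
    { toFun := fun B => ⟨B.1 * Q, hmem2 B⟩
      map_add' := fun A B => by ext; simp [add_mul]
      map_smul' := fun c A => by ext; simp [smul_mul_assoc] }
  let Φ : (H (m - 1) × H (n - 1)) →ₗ[k] H (n + m - 1) := f1.coprod f2
  have hΦ : ∀ A B, (Φ (A, B)).1 = A.1 * P + B.1 * Q := fun A B => rfl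
  have hinj : Function.Injective Φ := by
    rw [← LinearMap.ker_eq_bot, LinearMap.ker_eq_bot']
    rintro ⟨A, B⟩ hz
    have h0 : A.1 * P + B.1 * Q = 0 := by
      have := congrArg Subtype.val hz
      rwa [hΦ] at this
    have h10 := hlead 1 0 (by simp)
    rw [eval10 hPh, eval10 hQh, not_and_or] at h10
    have hAB : A.1 = 0 ∧ B.1 = 0 := by
      rcases h10 with hP0 | hQ0
      · have hB : B.1 = 0 := key P Q A.1 B.1 n m hn hPh hQh B.2 hP0 hlead h0
        have hA : A.1 = 0 := by
          rw [hB, zero_mul, add_zero] at h0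
          rcases mul_eq_zero.mp h0 with h | h
          · exact h
          · exact absurd h hP
        exact ⟨hA, hB⟩
      · have hA : A.1 = 0 := by
          refine key Q P B.1 A.1 m n hm hQh hPh A.2 hQ0 ?_ ?_
          · intro a b hab
            have := hlead a b hab
            tauto
          · linear_combination h0
        have hB : B.1 = 0 := by
          rw [hA, zero_mul, zero_add] at h0
          rcases mul_eq_zero.mp h0 with h | h
          · exact h
          · exact absurd h hQ
        exact ⟨hA, hB⟩
    exact Prod.ext (Subtype.ext hAB.1) (Subtype.ext hAB.2)
  have hfr : Module.finrank k (H (m - 1) × H (n - 1)) = Module.finrank k (H (n + m - 1)) := by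
    rw [Module.finrank_prod, finrank_h, finrank_h, finrank_h]
    omega
  have hsurj : Function.Surjective Φ :=
    (LinearMap.injective_iff_surjective_of_finrank_eq_finrank hfr).mp hinj
  refine ⟨LinearEquiv.ofBijective Φ ⟨hinj, hsurj⟩, fun A B => ?_⟩
  show (Φ (A, B)).1 = _
  rw [hΦ]
end
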